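/- For every n ≥ 1, the function L_n inherits the basic Laplace–Stieltjes transform properties from L_0: L_n(0) = 1, 0 < L_n(s) ≤ 1 for all s ≥ 0, L_n is strictly decreasing on [0,∞), and L_n(s) → 0 as s → ∞. -/

import Mathlib

open Filter

/-- The recursively defined overflow Laplace–Stieltjes transforms:
`ovLST L0 ms 0 = L0` and
`ovLST L0 ms n s = L_{n-1}(μ_n + s) / (1 - L_{n-1}(s) + L_{n-1}(μ_n + s))`. -/
noncomputable def ovLST (L0 : ℝ → ℝ) (ms : ℕ → ℝ) : ℕ → ℝ → ℝ
  | 0 => L0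
  | n + 1 => fun s =>
      ovLST L0 ms n (ms (n + 1) + s) /
        (1 - ovLST L0 ms n s + ovLST L0 ms n (ms (n + 1) + s))

/-- One induction step: the LST properties are preserved by the overflow recursion. -/
lemma ovLST_step (L : ℝ → ℝ) (m : ℝ) (hm : 0 < m)
    (h0 : L 0 = 1) (hpos : ∀ s, 0 ≤ s → 0 < L s ∧ L s ≤ 1)
    (hanti : StrictAntiOn L (Set.Ici 0)) (hlim : Tendsto L atTop (nhds 0)) :
    (fun s => L (m + s) / (1 - L s + L (m + s))) 0 = 1 ∧
    (∀ s, 0 ≤ s → 0 < L (m + s) / (1 - L s + L (m + s)) ∧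
        L (m + s) / (1 - L s + L (m + s)) ≤ 1) ∧
    StrictAntiOn (fun s => L (m + s) / (1 - L s + L (m + s))) (Set.Ici 0) ∧
    Tendsto (fun s => L (m + s) / (1 - L s + L (m + s))) atTop (nhds 0) := by
  have hshift : ∀ s : ℝ, 0 ≤ s → 0 < L (m + s) := fun s hs =>
    (hpos (m + s) (by linarith)).1
  have hden : ∀ s : ℝ, 0 ≤ s → 0 < 1 - L s + L (m + s) := by
    intro s hs
    have h1 := (hpos s hs).2
    have h2 := hshift s hs
    linarith
  refine ⟨?_, ?_, ?_, ?_⟩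
  · simp only [add_zero, h0]
    have := hshift 0 le_rfl
    rw [add_zero] at this
    rw [sub_self, zero_add, div_self this.ne']
  · intro s hs
    constructor
    · exact div_pos (hshift s hs) (hden s hs)
    · rw [div_le_one (hden s hs)]
      have := (hpos s hs).2
      linarith
  · intro s hs t ht hst
    simp only [Set.mem_Ici] at hs ht
    have hLts : L t < L s := hanti hs ht hst
    have hLmts : L (m + t) < L (m + s) :=
      hanti (by simp [Set.mem_Ici]; linarith) (by simp [Set.mem_Ici]; linarith)
        (by linarith)
    have hLs1 := (hpos s hs).2
    have hLmspos := hshift s hs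
    have hLmtpos := hshift t ht
    simp only
    rw [div_lt_div_iff₀ (hden t ht) (hden s hs)]
    nlinarith
  · have hmt : Tendsto (fun s : ℝ => m + s) atTop atTop :=
      tendsto_atTop_add_const_left atTop m tendsto_id
    have h1 : Tendsto (fun s => L (m + s)) atTop (nhds 0) := hlim.comp hmt
    have h2 : Tendsto (fun s => 1 - L s + L (m + s)) atTop (nhds 1) := by
      have := ((tendsto_const_nhds (x := (1:ℝ)) (f := atTop)).sub hlim).add h1
      simpa using this
    have h3 : Tendsto (fun s => L (m + s) / (1 - L s + L (m + s))) atTop (nhds (0 / 1)) :=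
      h1.div h2 one_ne_zero
    simpa using h3

theorem stmt_0 (μ : ℝ) (hμ : 0 < μ) (ms : ℕ → ℝ)
    (hms : ∀ n, 1 ≤ n → 0 < ms n)
    (hsum : HasSum (fun n => ms (n + 1)) μ)
    (L0 : ℝ → ℝ) (hL00 : L0 0 = 1)
    (hL0pos : ∀ s, 0 ≤ s → 0 < L0 s)
    (hL0anti : StrictAntiOn L0 (Set.Ici 0))
    (hL0lim : Tendsto L0 atTop (nhds 0)) :
    ∀ n, 1 ≤ n →
      ovLST L0 ms n 0 = 1 ∧
      (∀ s, 0 ≤ s → 0 < ovLST L0 ms n s ∧ ovLST L0 ms n s ≤ 1) ∧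
      StrictAntiOn (ovLST L0 ms n) (Set.Ici 0) ∧
      Tendsto (ovLST L0 ms n) atTop (nhds 0) := by
  have key : ∀ n,
      ovLST L0 ms n 0 = 1 ∧
      (∀ s, 0 ≤ s → 0 < ovLST L0 ms n s ∧ ovLST L0 ms n s ≤ 1) ∧
      StrictAntiOn (ovLST L0 ms n) (Set.Ici 0) ∧
      Tendsto (ovLST L0 ms n) atTop (nhds 0) := by
    intro n
    induction n with
    | zero =>
      refine ⟨hL00, ?_, hL0anti, hL0lim⟩
      intro s hs
      refine ⟨hL0pos s hs, ?_⟩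
      rcases eq_or_lt_of_le hs with h | h
      · show L0 s ≤ 1
        rw [← h, hL00]
      · have := hL0anti (Set.mem_Ici.mpr le_rfl) (Set.mem_Ici.mpr hs) h
        rw [hL00] at this
        exact this.le
    | succ n ih =>
      obtain ⟨ih0, ihpos, ihanti, ihlim⟩ := ih
      exact ovLST_step (ovLST L0 ms n) (ms (n + 1)) (hms (n + 1) (by omega))
        ih0 ihpos ihanti ihlim
  exact fun n _ => key n
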